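/- The number of ternary trees with n nodes equals (1/(2n+1)) * binomial(3n, n). -/

import Mathlib

/-- The three step types of a Motzkin path: H = (1,0), U = (1,1), D = (1,-1). -/
inductive Step : Type | H | U | D
deriving DecidableEq, Repr

/-- A ternary tree: either empty, or a node with left, middle and right subtrees. -/
inductive TernaryTree : Type
  | leaf : TernaryTree
  | node : TernaryTree → TernaryTree → TernaryTree → TernaryTree

/-- The number of nodes of a ternary tree. -/
def TernaryTree.size : TernaryTree → ℕ
  | .leaf => 0
  | .node a b c => 1 + a.size + b.size + c.size

deriving instance DecidableEq for TernaryTree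

open Finset
open Finset.HasAntidiagonal.antidiagonal (fst_le snd_le)

abbrev tripleNode (a b c : Finset TernaryTree) : Finset TernaryTree :=
  ((a ×ˢ b) ×ˢ c).map
    ⟨fun x => .node x.1.1 x.1.2 x.2, by
      rintro ⟨⟨a1, b1⟩, c1⟩ ⟨⟨a2, b2⟩, c2⟩ h
      simp only [TernaryTree.node.injEq] at h
      simp [h.1, h.2.1, h.2.2]⟩

def treesOfSize : ℕ → Finset TernaryTree
  | 0 => {.leaf}
  | n + 1 =>
    (antidiagonal n).attach.biUnion fun ij =>
      (antidiagonal ij.1.2).attach.biUnion fun kl =>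
        tripleNode (treesOfSize ij.1.1) (treesOfSize kl.1.1) (treesOfSize kl.1.2)
  decreasing_by
    · have := fst_le ij.2; omega
    · have := fst_le kl.2; have := snd_le ij.2; omega
    · have := snd_le kl.2; have := snd_le ij.2; omega

@[simp]
theorem treesOfSize_zero : treesOfSize 0 = {.leaf} := by rw [treesOfSize]

theorem treesOfSize_succ (n : ℕ) :
    treesOfSize (n + 1) =
      (antidiagonal n).biUnion fun ij =>
        (antidiagonal ij.2).biUnion fun kl =>
          tripleNode (treesOfSize ij.1) (treesOfSize kl.1) (treesOfSize kl.2) := by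
  rw [treesOfSize]
  ext
  simp

@[simp]
theorem mem_treesOfSize {x : TernaryTree} {n : ℕ} : x ∈ treesOfSize n ↔ x.size = n := by
  induction x generalizing n with
  | leaf => cases n <;> simp [treesOfSize_succ, TernaryTree.size]
  | node a b c iha ihb ihc =>
    cases n with
    | zero => simp [TernaryTree.size]
    | succ n =>
      simp only [treesOfSize_succ, mem_biUnion, HasAntidiagonal.mem_antidiagonal, mem_map, mem_product,
        Function.Embedding.coeFn_mk, Prod.exists, TernaryTree.size]
      constructor
      · rintro ⟨i, j, hij, k, l, hkl, a', b', c', ⟨⟨ha, hb⟩, hc⟩, h⟩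
        replace h := TernaryTree.node.inj h
        obtain ⟨rfl, rfl, rfl⟩ := h
        rw [iha] at ha; rw [ihb] at hb; rw [ihc] at hc
        omega
      · rintro h
        exact ⟨a.size, b.size + c.size, by omega, b.size, c.size, rfl,
          a, b, c, ⟨⟨iha.mpr rfl, ihb.mpr rfl⟩, ihc.mpr rfl⟩, rfl⟩

def t (n : ℕ) : ℕ := (treesOfSize n).card

@[simp] theorem t_zero : t 0 = 1 := by simp [t]

theorem t_succ (n : ℕ) :
    t (n + 1) = ∑ ij ∈ antidiagonal n, ∑ kl ∈ antidiagonal ij.2,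
      t ij.1 * (t kl.1 * t kl.2) := by
  rw [t, treesOfSize_succ, card_biUnion]
  · refine sum_congr rfl fun ij hij => ?_
    rw [card_biUnion]
    · refine sum_congr rfl fun kl _ => ?_
      simp [t, mul_assoc]
    · rintro ⟨k, l⟩ hkl ⟨k', l'⟩ hkl' hne
      simp_rw [disjoint_left]
      rintro x hx hx'
      simp only [mem_map, mem_product, Function.Embedding.coeFn_mk, Prod.exists] at hx hx'
      obtain ⟨a, b, c, ⟨⟨ha, hb⟩, hc⟩, rfl⟩ := hx
      obtain ⟨a', b', c', ⟨⟨ha', hb'⟩, hc'⟩, h⟩ := hx'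
      replace h := TernaryTree.node.inj h
      obtain ⟨rfl, rfl, rfl⟩ := h
      simp only [mem_treesOfSize] at ha hb hc ha' hb' hc'
      apply hne
      simp only [mem_coe, HasAntidiagonal.mem_antidiagonal] at hkl hkl'
      have : k = k' := by omega
      have : l = l' := by omega
      simp_all
  · rintro ⟨i, j⟩ hij ⟨i', j'⟩ hij' hne
    simp_rw [disjoint_left]
    rintro x hx hx'
    simp only [mem_biUnion, mem_map, mem_product, HasAntidiagonal.mem_antidiagonal,
      Function.Embedding.coeFn_mk, Prod.exists] at hx hx'
    obtain ⟨k, l, hkl, a, b, c, ⟨⟨ha, hb⟩, hc⟩, rfl⟩ := hx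
    obtain ⟨k', l', hkl', a', b', c', ⟨⟨ha', hb'⟩, hc'⟩, h⟩ := hx'
    replace h := TernaryTree.node.inj h
    obtain ⟨rfl, rfl, rfl⟩ := h
    simp only [mem_treesOfSize] at ha hb hc ha' hb' hc'
    apply hne
    simp only [mem_coe, HasAntidiagonal.mem_antidiagonal] at hij hij'
    have : i = i' := by omega
    have : j = j' := by omega
    simp_all

open PowerSeries
noncomputable def T : PowerSeries ℚ := PowerSeries.mk fun n => (t n : ℚ)

@[simp] theorem coeff_T (n : ℕ) : coeff n T = (t n : ℚ) := coeff_mk n _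

theorem coeff_T_succ (n : ℕ) : coeff (n + 1) T = coeff n (T ^ 3) := by
  rw [coeff_T, show (T ^ 3) = T * (T * T) by ring, coeff_mul]
  simp_rw [coeff_mul, coeff_T, t_succ n]
  push_cast
  simp [mul_sum]

/-- Closed form: `A r n = r * (3n+r-1)! / (n! * (2n+r)!)` -/
noncomputable def A (r n : ℕ) : ℚ :=
  r * ((3 * n + r - 1).factorial : ℚ) / ((n.factorial : ℚ) * ((2 * n + r).factorial : ℚ))

@[simp] theorem A_zero (n : ℕ) : A 0 n = 0 := by simp [A]

theorem A_base (r : ℕ) : A (r + 1) 0 = 1 := by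
  have h1 : 3 * 0 + (r + 1) - 1 = r := by omega
  have h2 : 2 * 0 + (r + 1) = r + 1 := by omega
  rw [A, h1, h2, Nat.factorial_succ]
  have : (r.factorial : ℚ) ≠ 0 := by exact_mod_cast (Nat.factorial_ne_zero r)
  have : ((r : ℚ) + 1) ≠ 0 := by positivity
  push_cast
  field_simp
  simp

theorem A_rec (r n : ℕ) : A (r + 1) (n + 1) = A r (n + 1) + A (r + 3) n := by
  have e1 : 3 * (n + 1) + (r + 1) - 1 = (3 * n + r + 2) + 1 := by omega
  have e2 : 3 * (n + 1) + r - 1 = 3 * n + r + 2 := by omega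
  have e3 : 3 * n + (r + 3) - 1 = 3 * n + r + 2 := by omega
  have e4 : 2 * (n + 1) + (r + 1) = (2 * n + r + 2) + 1 := by omega
  have e5 : 2 * (n + 1) + r = 2 * n + r + 2 := by omega
  have e6 : 2 * n + (r + 3) = (2 * n + r + 2) + 1 := by omega
  rw [A, A, A, e1, e2, e3, e4, e5, e6, Nat.factorial_succ (3 * n + r + 2), Nat.factorial_succ (2 * n + r + 2),
    Nat.factorial_succ n]
  have hx : ((3 * n + r + 2).factorial : ℚ) ≠ 0 := by exact_mod_cast Nat.factorial_ne_zero _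
  have hy : ((2 * n + r + 2).factorial : ℚ) ≠ 0 := by exact_mod_cast Nat.factorial_ne_zero _
  have hz : ((n).factorial : ℚ) ≠ 0 := by exact_mod_cast Nat.factorial_ne_zero _
  have h1 : ((3 * n + r + 2 : ℕ) : ℚ) + 1 ≠ 0 := by positivity
  have h2 : ((2 * n + r + 2 : ℕ) : ℚ) + 1 ≠ 0 := by positivity
  have h3 : ((n : ℚ) + 1) ≠ 0 := by positivity
  push_cast
  field_simp
  ring

theorem coeff_T_pow (n : ℕ) : ∀ r, coeff n (T ^ (r + 1)) = A (r + 1) n := by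
  induction n using Nat.strong_induction_on with
  | _ n IH =>
    intro r
    match n with
    | 0 =>
      rw [coeff_zero_eq_constantCoeff, map_pow, A_base]
      have : constantCoeff T = 1 := by
        rw [← coeff_zero_eq_constantCoeff, coeff_T, t_zero]; norm_num
      rw [this, one_pow]
    | m + 1 =>
      induction r with
      | zero =>
        rw [pow_one, coeff_T_succ, show (3 : ℕ) = 2 + 1 from rfl, IH m (by omega) 2,
          A_rec 0 m]
        simp
      | succ r ihr =>
        have key : coeff (m + 1) (T ^ (r + 2)) =
            coeff (m + 1) (T ^ (r + 1)) + coeff m (T ^ (r + 4)) := by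
          rw [show T ^ (r + 2) = T * T ^ (r + 1) by ring, coeff_mul,
            Finset.Nat.sum_antidiagonal_succ,
            show T ^ (r + 4) = T ^ 3 * T ^ (r + 1) by ring, coeff_mul]
          congr 1
          · rw [coeff_T, t_zero]; norm_num
          · exact Finset.sum_congr rfl fun p _ => by rw [coeff_T_succ]
        rw [key, ihr, IH m (by omega) (r + 3), A_rec (r + 1) m]

theorem t_eq (n : ℕ) : (t n : ℚ) * (2 * n + 1) = (3 * n).choose n := by
  have h := coeff_T_pow n 0
  rw [pow_one, coeff_T] at h
  have e : 3 * n + 1 - 1 = 3 * n := by omega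
  rw [h, A, e, Nat.cast_choose ℚ (by omega : n ≤ 3 * n),
    show 3 * n - n = 2 * n by omega, show 2 * n + 1 = (2 * n) + 1 from rfl,
    Nat.factorial_succ (2 * n)]
  have hx : ((3 * n).factorial : ℚ) ≠ 0 := by exact_mod_cast Nat.factorial_ne_zero _
  have hy : ((2 * n).factorial : ℚ) ≠ 0 := by exact_mod_cast Nat.factorial_ne_zero _
  have hz : ((n).factorial : ℚ) ≠ 0 := by exact_mod_cast Nat.factorial_ne_zero _
  have h1 : ((2 * n : ℕ) : ℚ) + 1 ≠ 0 := by positivity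
  push_cast
  field_simp

theorem ternary_tree_count (n : ℕ) :
    Nat.card {T : TernaryTree // T.size = n} = (3 * n).choose n / (2 * n + 1) := by
  have hc : Nat.card {T : TernaryTree // T.size = n} =
      Nat.card {T : TernaryTree // T ∈ treesOfSize n} :=
    Nat.card_congr (Equiv.subtypeEquivRight fun T => mem_treesOfSize.symm)
  have hcard : Nat.card {T : TernaryTree // T.size = n} = t n := by
    rw [hc, Nat.card_eq_fintype_card, Fintype.card_coe]
    rfl
  have hmul : (3 * n).choose n = t n * (2 * n + 1) := by exact_mod_cast (t_eq n).symm
  rw [hcard]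
  exact (Nat.div_eq_of_eq_mul_left (by omega) hmul).symm
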